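/- Let F = {f_0, ..., f_{k-1}} be a set of permutations of {0, 1, ..., 2^m - 1} together with subsets X_0, ..., X_{k-1} each of size 2^{m-1}, satisfying the orthogonality condition: |f_i(X_i) ∩ f_j(X_i)| = 2^{m-1} if i = j and 0 if i ≠ j, for all i, j. Then k ≤ m + 1. -/

import Mathlib

private def compP {α : Type*} (g : ℕ → Equiv.Perm α) (b : ℕ → Bool) : ℕ → Equiv.Perm α
  | 0 => 1
  | n+1 => compP g b n * (if b n then g n else 1)

private lemma compP_le {α : Type*} (g : ℕ → Equiv.Perm α) (S : ℕ → Finset α) (N : ℕ)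
    (H1 : ∀ t i, t < N → i < N → t ≠ i → ∀ x, g t x ∈ S i ↔ x ∈ S i)
    (b : ℕ → Bool) {i : ℕ} (hi : i < N) :
    ∀ n, n ≤ i → ∀ x, compP g b n x ∈ S i ↔ x ∈ S i := by
  intro n
  induction n with
  | zero => intro _ x; simp [compP]
  | succ n ih =>
    intro hn x
    simp only [compP, Equiv.Perm.mul_apply]
    rw [ih (by omega)]
    by_cases hb : b n
    · simp only [hb, if_pos]
      exact H1 n i (by omega) hi (by omega) x
    · simp [hb]

private lemma compP_gt {α : Type*} (g : ℕ → Equiv.Perm α) (S : ℕ → Finset α) (N : ℕ)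
    (H1 : ∀ t i, t < N → i < N → t ≠ i → ∀ x, g t x ∈ S i ↔ x ∈ S i)
    (H2 : ∀ i, i < N → ∀ x, g i x ∈ S i ↔ x ∉ S i)
    (b : ℕ → Bool) {i : ℕ} (hi : i < N) :
    ∀ n, i < n → n ≤ N → ∀ x, (compP g b n x ∈ S i ↔ (x ∈ S i ↔ b i = false)) := by
  intro n
  induction n with
  | zero => omega
  | succ n ih =>
    intro hn hN x
    simp only [compP, Equiv.Perm.mul_apply]
    rcases Nat.lt_or_ge i n with h | h
    · rw [ih h (by omega)]
      by_cases hb : b n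
      · simp only [hb, if_pos]
        rw [H1 n i (by omega) hi (by omega)]
      · simp [hb]
    · have hin : i = n := by omega
      subst hin
      rw [compP_le g S N H1 b hi i le_rfl]
      by_cases hb : b i
      · rw [if_pos hb, H2 i hi]
        simp [hb]
      · simp [hb]

theorem stmt_4 (m k : ℕ) (f : Fin k → Equiv.Perm (Fin (2 ^ m)))
    (X : Fin k → Finset (Fin (2 ^ m)))
    (hcard : ∀ i, (X i).card = 2 ^ (m - 1))
    (horth : ∀ i j, (((X i).image (f i)) ∩ ((X i).image (f j))).card =
      if i = j then 2 ^ (m - 1) else 0) :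
    k ≤ m + 1 := by
  by_contra hk
  push_neg at hk
  have hk2 : m + 2 ≤ k := hk
  have h0k : 0 < k := by omega
  -- m = 0 case: contradiction directly
  rcases Nat.eq_zero_or_pos m with hm | hm
  · subst hm
    have h01 : (⟨0, h0k⟩ : Fin k) ≠ ⟨1, by omega⟩ := by simp
    have h := horth ⟨0, h0k⟩ ⟨1, by omega⟩
    rw [if_neg h01] at h
    have hx : ∃ x, x ∈ X ⟨0, h0k⟩ := by
      have := hcard ⟨0, h0k⟩
      have hne : (X ⟨0, h0k⟩).Nonempty := by
        rw [← Finset.card_pos, this]; norm_num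
      exact hne
    obtain ⟨x, hx⟩ := hx
    have heq : f ⟨0, h0k⟩ x = f ⟨1, by omega⟩ x := by
      apply Fin.ext
      have h1 := (f ⟨0, h0k⟩ x).isLt
      have h2 := (f ⟨1, by omega⟩ x).isLt
      simp only [pow_zero] at h1 h2
      omega
    have hmem : f ⟨0, h0k⟩ x ∈ ((X ⟨0, h0k⟩).image (f ⟨0, h0k⟩)) ∩
        ((X ⟨0, h0k⟩).image (f ⟨1, by omega⟩)) := by
      rw [Finset.mem_inter]
      exact ⟨Finset.mem_image_of_mem _ hx, heq ▸ Finset.mem_image_of_mem _ hx⟩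
    have := Finset.card_pos.mpr ⟨_, hmem⟩
    omega
  -- main case m ≥ 1
  have h2m : 2 ^ (m - 1) + 2 ^ (m - 1) = 2 ^ m := by
    have hm1 : m - 1 + 1 = m := by omega
    calc 2 ^ (m - 1) + 2 ^ (m - 1) = 2 ^ (m - 1) * 2 := by ring
    _ = 2 ^ (m - 1 + 1) := by rw [pow_succ]
    _ = 2 ^ m := by rw [hm1]
  have hcompl : ∀ i j : Fin k, i ≠ j → (X i).image (f j) = ((X i).image (f i))ᶜ := by
    intro i j hij
    have hdisj : ((X i).image (f i)) ∩ ((X i).image (f j)) = ∅ :=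
      Finset.card_eq_zero.mp (by rw [horth i j, if_neg hij])
    have hsub : (X i).image (f j) ⊆ ((X i).image (f i))ᶜ := by
      intro x hx
      rw [Finset.mem_compl]
      intro hx'
      have : x ∈ ((X i).image (f i)) ∩ ((X i).image (f j)) :=
        Finset.mem_inter.mpr ⟨hx', hx⟩
      rw [hdisj] at this
      exact absurd this (Finset.notMem_empty x)
    apply Finset.eq_of_subset_of_card_le hsub
    rw [Finset.card_compl, Finset.card_image_of_injective _ (f j).injective,
      Finset.card_image_of_injective _ (f i).injective, hcard]
    simp only [Fintype.card_fin]
    rw [← h2m, Nat.add_sub_cancel]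
  have hmemA : ∀ (i : Fin k) (x : Fin (2 ^ m)), f i x ∈ (X i).image (f i) ↔ x ∈ X i := by
    intro i x
    simp [Finset.mem_image, (f i).injective.eq_iff]
  have hmemB : ∀ (i j : Fin k), i ≠ j → ∀ x : Fin (2 ^ m),
      (f j x ∈ (X i).image (f i) ↔ x ∉ X i) := by
    intro i j hij x
    have h1 : f j x ∈ (X i).image (f j) ↔ x ∈ X i := by
      simp [Finset.mem_image, (f j).injective.eq_iff]
    rw [hcompl i j hij, Finset.mem_compl] at h1
    tauto
  -- setup indices
  let z : Fin k := ⟨0, h0k⟩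
  let ι : ℕ → Fin k := fun n => if h : n + 1 < k then ⟨n + 1, h⟩ else z
  let A : ℕ → Finset (Fin (2 ^ m)) := fun n => (X (ι n)).image (f (ι n))
  let gn : ℕ → Equiv.Perm (Fin (2 ^ m)) := fun n => f (ι n) * (f z)⁻¹
  have hιval : ∀ n (hn : n < m + 1), ι n = ⟨n + 1, by omega⟩ := by
    intro n hn
    simp only [ι]
    rw [dif_pos (by omega)]
  have hιne0 : ∀ n, n < m + 1 → ι n ≠ z := by
    intro n hn
    rw [hιval n hn]
    simp only [z, Ne, Fin.mk.injEq]
    omega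
  have hιinj : ∀ t i, t < m + 1 → i < m + 1 → t ≠ i → ι i ≠ ι t := by
    intro t i ht hi hti
    rw [hιval t ht, hιval i hi]
    simp only [Ne, Fin.mk.injEq]
    omega
  have H1 : ∀ t i, t < m + 1 → i < m + 1 → t ≠ i → ∀ x, gn t x ∈ A i ↔ x ∈ A i := by
    intro t i ht hi hti x
    have hl : gn t x ∈ A i ↔ (f z)⁻¹ x ∉ X (ι i) := hmemB (ι i) (ι t) (hιinj t i ht hi hti) _
    have hr : x ∈ A i ↔ (f z)⁻¹ x ∉ X (ι i) := by
      have := hmemB (ι i) z (hιne0 i hi) ((f z)⁻¹ x)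
      rwa [Equiv.Perm.coe_inv, Equiv.apply_symm_apply] at this
    rw [hl, hr]
  have H2 : ∀ i, i < m + 1 → ∀ x, gn i x ∈ A i ↔ x ∉ A i := by
    intro i hi x
    have hl : gn i x ∈ A i ↔ (f z)⁻¹ x ∈ X (ι i) := hmemA (ι i) _
    have hr : x ∈ A i ↔ (f z)⁻¹ x ∉ X (ι i) := by
      have := hmemB (ι i) z (hιne0 i hi) ((f z)⁻¹ x)
      rwa [Equiv.Perm.coe_inv, Equiv.apply_symm_apply] at this
    rw [hl, hr]
    tauto
  -- injection from Bool^(m+1) into Fin (2^m)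
  have hx0 : 0 < 2 ^ m := Nat.pow_pos (by norm_num)
  let x0 : Fin (2 ^ m) := ⟨0, hx0⟩
  let ext : (Fin (m + 1) → Bool) → ℕ → Bool := fun b n => if h : n < m + 1 then b ⟨n, h⟩ else false
  have hinj : Function.Injective
      (fun b : Fin (m + 1) → Bool => compP gn (ext b) (m + 1) x0) := by
    intro b c hbc
    simp only at hbc
    funext i
    have hi : (i : ℕ) < m + 1 := i.isLt
    have h1 := compP_gt gn A (m + 1) H1 H2 (ext b) hi (m + 1) hi le_rfl x0
    have h2 := compP_gt gn A (m + 1) H1 H2 (ext c) hi (m + 1) hi le_rfl x0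
    rw [hbc] at h1
    rw [h2] at h1
    have hb : ext b (i : ℕ) = b i := by
      simp only [ext]
      rw [dif_pos hi]
    have hc : ext c (i : ℕ) = c i := by
      simp only [ext]
      rw [dif_pos hi]
    rw [hb, hc] at h1
    by_cases hx : x0 ∈ A (i : ℕ) <;> simp [hx] at h1 <;>
      cases hB : b i <;> cases hC : c i <;> simp_all
  have hle : 2 ^ (m + 1) ≤ 2 ^ m := by
    have h := Fintype.card_le_of_injective _ hinj
    simpa using h
  have hlt : 2 ^ m < 2 ^ (m + 1) := by
    have : (2:ℕ) ^ m * 1 < 2 ^ m * 2 := by omega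
    calc 2 ^ m = 2 ^ m * 1 := by ring
    _ < 2 ^ m * 2 := this
    _ = 2 ^ (m + 1) := (pow_succ 2 m).symm
  omega
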